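/- Lemma A.2 (Bellman completeness implies uniformly bounded powers of the whitened cross-covariance). Let 𝒮 be a nonempty finite type, let d ≥ 1, let Φ be a real matrix with rows (φ_i)_{i∈𝒮} in ℝᵈ, let μ : 𝒮 → ℝ be nonnegative with ∑_{i∈𝒮} μ_i = 1, and let P be a row-stochastic 𝒮×𝒮 real matrix (all entries nonnegative, each row summing to 1). Define Σ_cov := Φᵀ·diag(μ)·Φ and Σ_cr := Φᵀ·diag(μ)·P·Φ, and assume Σ_cov is positive definite. Assume the completeness condition: for every θ ∈ ℝᵈ there exists θ′ ∈ ℝᵈ with Φθ′ = PΦθ. Let ρ := max_{i∈𝒮} ‖Σ_cov^{−1/2}·φ_i‖₂. Then for every natural number j, ‖(Σ_cov^{−1/2}·Σ_cr·Σ_cov^{−1/2})ʲ‖ ≤ ρ. -/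

import Mathlib

open scoped Matrix.Norms.L2Operator
open Matrix

namespace Matrix.PosSemidef

open scoped ComplexOrder in
/-- The positive semidefinite square root of a positive semidefinite matrix
(the definition removed from Mathlib, restored with its old meaning). -/
noncomputable def sqrt {n 𝕜 : Type*} [Fintype n] [RCLike 𝕜] [DecidableEq n]
    {A : Matrix n n 𝕜} (hA : PosSemidef A) : Matrix n n 𝕜 :=
  (hA.1.eigenvectorUnitary : Matrix n n 𝕜) * diagonal (((↑) : ℝ → 𝕜) ∘ (fun x => √x) ∘ hA.1.eigenvalues) *
  (star hA.1.eigenvectorUnitary : Matrix n n 𝕜)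

end Matrix.PosSemidef

open scoped ComplexOrder in
theorem sqrt_isHermitian_aux {n 𝕜 : Type*} [Fintype n] [RCLike 𝕜] [DecidableEq n]
    {A : Matrix n n 𝕜} (hA : PosSemidef A) : hA.sqrt.IsHermitian := by
  unfold Matrix.PosSemidef.sqrt
  rw [IsHermitian, ← star_eq_conjTranspose]
  simp only [Unitary.coe_star, star_mul, star_star, ← Matrix.mul_assoc]
  congr 2
  rw [star_eq_conjTranspose, diagonal_conjTranspose]
  congr 1
  ext i
  simp

open scoped ComplexOrder in
theorem sqrt_mul_self_aux {n 𝕜 : Type*} [Fintype n] [RCLike 𝕜] [DecidableEq n]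
    {A : Matrix n n 𝕜} (hA : PosSemidef A) : hA.sqrt * hA.sqrt = A := by
  unfold Matrix.PosSemidef.sqrt
  conv_rhs => rw [hA.1.spectral_theorem, Unitary.conjStarAlgAut_apply]
  have hU := Unitary.coe_star_mul_self hA.1.eigenvectorUnitary
  calc _ = (hA.1.eigenvectorUnitary : Matrix n n 𝕜) *
      (diagonal (((↑) : ℝ → 𝕜) ∘ (fun x => √x) ∘ hA.1.eigenvalues) *
      ((star hA.1.eigenvectorUnitary : Matrix n n 𝕜) * (hA.1.eigenvectorUnitary : Matrix n n 𝕜)) *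
      diagonal (((↑) : ℝ → 𝕜) ∘ (fun x => √x) ∘ hA.1.eigenvalues)) *
      (star hA.1.eigenvectorUnitary : Matrix n n 𝕜) := by simp only [Matrix.mul_assoc]
    _ = _ := by
      rw [hU, Matrix.mul_one, diagonal_mul_diagonal]
      congr 3
      ext i
      simp only [Function.comp_apply]
      rw [← RCLike.ofReal_mul, Real.mul_self_sqrt (hA.eigenvalues_nonneg i)]

/-- Lemma A.2: Bellman completeness implies that all powers of the whitened
cross-covariance matrix have operator norm at most the statistical leverage
`ρ = max_i ‖Σ_cov^{-1/2} φ_i‖₂`.  Here `Φ` stacks the features, `μ` is the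
offline distribution and `P` is the (row-stochastic) transition matrix. -/
theorem stmt_5 {S : Type*} [Fintype S] [DecidableEq S] [Nonempty S]
    (d : ℕ) (hd : 1 ≤ d)
    (Φ : Matrix S (Fin d) ℝ) (μ : S → ℝ)
    (hμ0 : ∀ i, 0 ≤ μ i) (hμ1 : ∑ i, μ i = 1)
    (P : Matrix S S ℝ) (hP0 : ∀ i j, 0 ≤ P i j) (hP1 : ∀ i, ∑ j, P i j = 1)
    (Scov Scr : Matrix (Fin d) (Fin d) ℝ)
    (hScov : Scov = Φᵀ * Matrix.diagonal μ * Φ)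
    (hScr : Scr = Φᵀ * Matrix.diagonal μ * P * Φ)
    (hcov : Scov.PosDef)
    (hcomplete : ∀ θ : Fin d → ℝ, ∃ θ' : Fin d → ℝ, Φ *ᵥ θ' = P *ᵥ (Φ *ᵥ θ)) :
    ∀ j : ℕ,
      ‖(hcov.posSemidef.sqrt⁻¹ * Scr * hcov.posSemidef.sqrt⁻¹) ^ j‖ ≤
        ⨆ i : S, ‖(WithLp.equiv 2 (Fin d → ℝ)).symm
          (hcov.posSemidef.sqrt⁻¹ *ᵥ fun j' => Φ i j')‖ := by
  intro j
  set R := hcov.posSemidef.sqrt with hRdef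
  set ρ : ℝ := ⨆ i : S, ‖(WithLp.equiv 2 (Fin d → ℝ)).symm
      (R⁻¹ *ᵥ fun j' => Φ i j')‖ with hρdef
  -- basic facts about R
  have hRpsd : R.IsHermitian := sqrt_isHermitian_aux _
  have hRsym : Rᵀ = R := by
    have := hRpsd
    rwa [Matrix.IsHermitian, Matrix.conjTranspose_eq_transpose_of_trivial] at this
  have hRR : R * R = Scov := sqrt_mul_self_aux _
  have hdet : IsUnit R.det := by
    have h1 : R.det * R.det = Scov.det := by rw [← Matrix.det_mul, hRR]
    have h2 : (0:ℝ) < Scov.det := hcov.det_pos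
    refine isUnit_iff_ne_zero.2 fun h => ?_
    rw [h, mul_zero] at h1; linarith
  have hRiR : R⁻¹ * R = 1 := Matrix.nonsing_inv_mul R hdet
  have hRRi : R * R⁻¹ = 1 := Matrix.mul_nonsing_inv R hdet
  have hRisym : (R⁻¹)ᵀ = R⁻¹ := by rw [Matrix.transpose_nonsing_inv, hRsym]
  -- the completeness matrix M
  choose θ' hθ' using hcomplete
  set M : Matrix (Fin d) (Fin d) ℝ :=
    Matrix.of (fun k l => θ' (Pi.single l 1) k) with hMdef
  have hΦM : Φ * M = P * Φ := by
    ext i l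
    have h := congrFun (hθ' (Pi.single l 1)) i
    have hcol : Φ *ᵥ Pi.single l 1 = fun i => Φ i l := by
      ext i; simp [Matrix.mulVec_single]
    rw [hcol] at h
    simpa [Matrix.mul_apply, Matrix.mulVec, dotProduct, hMdef] using h
  have hScrM : Scr = Scov * M := by
    rw [hScr, hScov, Matrix.mul_assoc (Φᵀ * Matrix.diagonal μ) P Φ, ← hΦM, ← Matrix.mul_assoc]
  -- A = R * M * R⁻¹ and powers
  have hA : R⁻¹ * Scr * R⁻¹ = R * M * R⁻¹ := by
    rw [hScrM, ← hRR]
    calc R⁻¹ * (R * R * M) * R⁻¹ = (R⁻¹ * R) * ((R * M) * R⁻¹) := by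
          simp only [mul_assoc]
      _ = R * M * R⁻¹ := by rw [hRiR, one_mul]
  have hApow : ∀ n : ℕ, (R⁻¹ * Scr * R⁻¹) ^ n = R * M ^ n * R⁻¹ := by
    intro n
    induction n with
    | zero => simp [hRRi]
    | succ n ih =>
        rw [pow_succ, ih, hA, pow_succ]
        calc R * M ^ n * R⁻¹ * (R * M * R⁻¹)
            = R * (M ^ n * ((R⁻¹ * R) * (M * R⁻¹))) := by simp only [mul_assoc]
          _ = R * (M ^ n * M) * R⁻¹ := by rw [hRiR, one_mul]; simp only [mul_assoc]
  have hΦMj : ∀ n : ℕ, Φ * M ^ n = P ^ n * Φ := by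
    intro n
    induction n with
    | zero => simp
    | succ n ih =>
        rw [pow_succ, pow_succ, ← Matrix.mul_assoc, ih, Matrix.mul_assoc, hΦM, ← Matrix.mul_assoc]
  -- P^j is row-stochastic
  have hPj0 : ∀ (n : ℕ) i s, 0 ≤ (P ^ n) i s := by
    intro n
    induction n with
    | zero =>
        intro i s
        by_cases h : i = s <;> simp [pow_zero, Matrix.one_apply, h]
    | succ n ih =>
        intro i s
        rw [pow_succ, Matrix.mul_apply]
        exact Finset.sum_nonneg fun t _ => mul_nonneg (ih i t) (hP0 t s)
  have hPj1 : ∀ (n : ℕ) i, ∑ s, (P ^ n) i s = 1 := by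
    intro n
    induction n with
    | zero => intro i; simp [pow_zero, Matrix.one_apply]
    | succ n ih =>
        intro i
        rw [pow_succ]
        simp only [Matrix.mul_apply]
        rw [Finset.sum_comm]
        calc ∑ t, ∑ s, (P ^ n) i t * P t s
            = ∑ t, (P ^ n) i t * ∑ s, P t s := by
              simp [Finset.mul_sum]
          _ = 1 := by simp [hP1, ih]
  -- ρ is a bound for each column, and nonneg
  have hbdd : BddAbove (Set.range fun i : S =>
      ‖(WithLp.equiv 2 (Fin d → ℝ)).symm (R⁻¹ *ᵥ fun j' => Φ i j')‖) :=
    Set.Finite.bddAbove (Set.finite_range _)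
  have hρ_le : ∀ i : S,
      ‖(WithLp.equiv 2 (Fin d → ℝ)).symm (R⁻¹ *ᵥ fun j' => Φ i j')‖ ≤ ρ :=
    fun i => le_ciSup hbdd i
  have hρ0 : 0 ≤ ρ :=
    le_trans (norm_nonneg _) (hρ_le (Classical.arbitrary S))
  -- squared norms of euclidean vectors
  have hnormsq : ∀ v : Fin d → ℝ,
      ‖(WithLp.equiv 2 (Fin d → ℝ)).symm v‖ ^ 2 = ∑ k, v k ^ 2 := by
    intro v
    rw [EuclideanSpace.norm_eq, Real.sq_sqrt (Finset.sum_nonneg fun k _ => sq_nonneg _)]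
    simp [sq_abs]
  have hcolsq : ∀ s : S, ∑ k, ((R⁻¹ *ᵥ fun j' => Φ s j') k) ^ 2 ≤ ρ ^ 2 := by
    intro s
    rw [← hnormsq]
    exact pow_le_pow_left₀ (norm_nonneg _) (hρ_le s) 2
  -- the key quadratic bound
  have key : ∀ x : Fin d → ℝ,
      ∑ k, (((R⁻¹ * Scr * R⁻¹) ^ j *ᵥ x) k) ^ 2 ≤ ρ ^ 2 * ∑ k, x k ^ 2 := by
    intro x
    set θ : Fin d → ℝ := R⁻¹ *ᵥ x with hθdef
    set v : Fin d → ℝ := M ^ j *ᵥ θ with hvdef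
    set w : S → ℝ := Φ *ᵥ θ with hwdef
    have hAx : (R⁻¹ * Scr * R⁻¹) ^ j *ᵥ x = R *ᵥ v := by
      rw [hApow, ← Matrix.mulVec_mulVec, ← Matrix.mulVec_mulVec]
    have hΦv : Φ *ᵥ v = P ^ j *ᵥ w := by
      rw [hvdef, Matrix.mulVec_mulVec, hΦMj, ← Matrix.mulVec_mulVec]
    -- quadratic form identity
    have hquad : ∑ k, ((R *ᵥ v) k) ^ 2 = ∑ i, μ i * ((Φ *ᵥ v) i) ^ 2 := by
      have h1 : ∑ k, ((R *ᵥ v) k) ^ 2 = (R *ᵥ v) ⬝ᵥ (R *ᵥ v) := by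
        simp [dotProduct, sq]
      have h2 : (R *ᵥ v) ⬝ᵥ (R *ᵥ v) = v ⬝ᵥ (Scov *ᵥ v) := by
        rw [dotProduct_mulVec, ← Matrix.mulVec_transpose, hRsym,
          Matrix.mulVec_mulVec, hRR, dotProduct_comm,
          dotProduct_mulVec, ← Matrix.mulVec_transpose,
          hcov.posSemidef.1.eq.symm, Matrix.conjTranspose_eq_transpose_of_trivial,
          Matrix.transpose_transpose]
      have h3 : v ⬝ᵥ (Scov *ᵥ v) = ∑ i, μ i * ((Φ *ᵥ v) i) ^ 2 := by
        rw [hScov, ← Matrix.mulVec_mulVec, ← Matrix.mulVec_mulVec,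
          dotProduct_mulVec, Matrix.vecMul_transpose]
        simp [dotProduct, Matrix.mulVec_diagonal, sq]
        exact Finset.sum_congr rfl fun i _ => by ring
      rw [h1, h2, h3]
    -- Jensen step
    have hJensen : ∀ i : S, ((P ^ j *ᵥ w) i) ^ 2 ≤ ∑ s, (P ^ j) i s * (w s) ^ 2 := by
      intro i
      have hcs := Finset.sum_mul_sq_le_sq_mul_sq Finset.univ
        (fun s => Real.sqrt ((P ^ j) i s)) (fun s => Real.sqrt ((P ^ j) i s) * w s)
      have hfg : ∀ s : S, Real.sqrt ((P ^ j) i s) * (Real.sqrt ((P ^ j) i s) * w s)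
          = (P ^ j) i s * w s := by
        intro s
        rw [← mul_assoc, Real.mul_self_sqrt (hPj0 j i s)]
      have hf2 : ∀ s : S, Real.sqrt ((P ^ j) i s) ^ 2 = (P ^ j) i s := fun s =>
        Real.sq_sqrt (hPj0 j i s)
      have hg2 : ∀ s : S, (Real.sqrt ((P ^ j) i s) * w s) ^ 2 = (P ^ j) i s * w s ^ 2 := by
        intro s
        rw [mul_pow, hf2]
      simp only [hfg, hf2, hg2] at hcs
      rw [hPj1 j i, one_mul] at hcs
      have : (P ^ j *ᵥ w) i = ∑ s, (P ^ j) i s * w s := by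
        simp [Matrix.mulVec, dotProduct]
      rw [this]
      exact hcs
    -- bound on w s ^ 2
    have hw2 : ∀ s : S, (w s) ^ 2 ≤ ρ ^ 2 * ∑ k, x k ^ 2 := by
      intro s
      have hsym' : ∀ k l, R⁻¹ k l = R⁻¹ l k := fun k l =>
        (show R⁻¹ k l = R⁻¹ l k from congrFun (congrFun hRisym l) k)
      have hws : w s = ∑ k, (R⁻¹ *ᵥ fun j' => Φ s j') k * x k := by
        simp only [hwdef, hθdef, Matrix.mulVec, dotProduct,
          Finset.mul_sum, Finset.sum_mul]
        rw [Finset.sum_comm]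
        exact Finset.sum_congr rfl fun a _ => Finset.sum_congr rfl fun b _ => by
          rw [hsym' b a]; ring
      rw [hws]
      calc (∑ k, (R⁻¹ *ᵥ fun j' => Φ s j') k * x k) ^ 2
          ≤ (∑ k, ((R⁻¹ *ᵥ fun j' => Φ s j') k) ^ 2) * ∑ k, x k ^ 2 :=
            Finset.sum_mul_sq_le_sq_mul_sq _ _ _
        _ ≤ ρ ^ 2 * ∑ k, x k ^ 2 :=
            mul_le_mul_of_nonneg_right (hcolsq s)
              (Finset.sum_nonneg fun k _ => sq_nonneg _)
    -- put it together
    rw [hAx, hquad, hΦv]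
    calc ∑ i, μ i * ((P ^ j *ᵥ w) i) ^ 2
        ≤ ∑ i, μ i * ∑ s, (P ^ j) i s * (w s) ^ 2 :=
          Finset.sum_le_sum fun i _ =>
            mul_le_mul_of_nonneg_left (hJensen i) (hμ0 i)
      _ = ∑ s, (∑ i, μ i * (P ^ j) i s) * (w s) ^ 2 := by
          simp only [Finset.mul_sum, Finset.sum_mul]
          rw [Finset.sum_comm]
          exact Finset.sum_congr rfl fun s _ =>
            Finset.sum_congr rfl fun i _ => by ring
      _ ≤ ∑ s, (∑ i, μ i * (P ^ j) i s) * (ρ ^ 2 * ∑ k, x k ^ 2) :=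
          Finset.sum_le_sum fun s _ =>
            mul_le_mul_of_nonneg_left (hw2 s)
              (Finset.sum_nonneg fun i _ => mul_nonneg (hμ0 i) (hPj0 j i s))
      _ = ρ ^ 2 * ∑ k, x k ^ 2 := by
          rw [← Finset.sum_mul]
          have : ∑ s, ∑ i, μ i * (P ^ j) i s = 1 := by
            rw [Finset.sum_comm]
            calc ∑ i, ∑ s, μ i * (P ^ j) i s
                = ∑ i, μ i * ∑ s, (P ^ j) i s := by simp [Finset.mul_sum]
              _ = 1 := by simp [hPj1, hμ1]
          rw [this, one_mul]
  -- conclude via the operator norm characterization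
  rw [Matrix.l2_opNorm_def]
  refine ContinuousLinearMap.opNorm_le_bound _ hρ0 fun x => ?_
  have hx : ∀ y : EuclideanSpace ℝ (Fin d),
      ‖y‖ = Real.sqrt (∑ k, (y k) ^ 2) := by
    intro y
    rw [EuclideanSpace.norm_eq]
    congr 1
    exact Finset.sum_congr rfl fun k _ => by rw [Real.norm_eq_abs, sq_abs]
  have happ : (Matrix.toEuclideanLin.trans LinearMap.toContinuousLinearMap
      ((R⁻¹ * Scr * R⁻¹) ^ j)) x =
      (WithLp.equiv 2 (Fin d → ℝ)).symm
        (((R⁻¹ * Scr * R⁻¹) ^ j) *ᵥ (WithLp.equiv 2 (Fin d → ℝ)) x) := rfl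
  rw [happ, hx, hx]
  have hkey := key ((WithLp.equiv 2 (Fin d → ℝ)) x)
  have h1 : ∀ k, ((WithLp.equiv 2 (Fin d → ℝ)).symm
      (((R⁻¹ * Scr * R⁻¹) ^ j) *ᵥ (WithLp.equiv 2 (Fin d → ℝ)) x)) k =
      (((R⁻¹ * Scr * R⁻¹) ^ j) *ᵥ (WithLp.equiv 2 (Fin d → ℝ)) x) k := fun k => rfl
  simp only [h1]
  calc Real.sqrt (∑ k, (((R⁻¹ * Scr * R⁻¹) ^ j *ᵥ (WithLp.equiv 2 (Fin d → ℝ)) x) k) ^ 2)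
      ≤ Real.sqrt (ρ ^ 2 * ∑ k, ((WithLp.equiv 2 (Fin d → ℝ)) x k) ^ 2) :=
        Real.sqrt_le_sqrt hkey
    _ = ρ * Real.sqrt (∑ k, ((WithLp.equiv 2 (Fin d → ℝ)) x k) ^ 2) := by
        rw [Real.sqrt_mul (sq_nonneg ρ), Real.sqrt_sq hρ0]
    _ = ρ * Real.sqrt (∑ k, (x k) ^ 2) := rfl
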